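/- Let T = {a_1, a_2, ..., a_r} ⊆ [n-1] with 1 ≤ a_1 < a_2 < ... < a_r < n, set a_0 = 0 and a_{r+1} = n, and let c_i = a_i − a_{i-1} for i ∈ [r+1]. If N = #{w ∈ S_n : Des(w) ⊆ T}, then Σ_{w ∈ S_n : Des(w) ⊆ T} des(w) = N · ( r − Σ_{i=1}^r binom(c_i + c_{i+1}, c_i)^{-1} ). Equivalently, for each i ∈ [r], the number of w ∈ S_n with Des(w) ⊆ T and a_i ∈ Des(w) equals N·(1 − binom(c_i + c_{i+1}, c_i)^{-1}). -/

import Mathlib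

open Polynomial

open scoped Classical
open scoped Nat

noncomputable section

/-- The descent set of a permutation `w` of `Fin n`, recorded as a subset of
`{1, ..., n-1}` (1-based positions, as in the paper: `i ∈ Des(w)` iff `w(i) > w(i+1)`). -/
def descSet {n : ℕ} (w : Equiv.Perm (Fin n)) : Finset ℕ :=
  (Finset.univ.filter (fun i : Fin (n - 1) =>
      w ⟨i.val + 1, by have := i.isLt; omega⟩ < w ⟨i.val, by have := i.isLt; omega⟩)).image
    (fun i => i.val + 1)

/-- `A^T_n(x) = Σ_{w ∈ S_n, Des(w) ⊆ T} x^{des(w)}` (note `Des(w) ⊆ {1,...,n-1}`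
automatically, so this also realizes the convention `A^T_n := A^{T ∩ [n-1]}_n`). -/
def Apoly (n : ℕ) (T : Finset ℕ) : Polynomial ℝ :=
  ∑ w ∈ Finset.univ.filter (fun w : Equiv.Perm (Fin n) => descSet w ⊆ T),
    X ^ (descSet w).card

/-- `p^T_{n,k}(x) = Σ x^{des(w)}` over permutations `w ∈ S_{n+1}` with `w(1) = k+1`
(0-based: `w 0 = k`) and `Des(w) ⊆ T`. -/
def ppoly (n k : ℕ) (T : Finset ℕ) : Polynomial ℝ :=
  ∑ w ∈ Finset.univ.filter (fun w : Equiv.Perm (Fin (n + 1)) =>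
      (w 0 : ℕ) = k ∧ descSet w ⊆ T),
    X ^ (descSet w).card

/-- A real polynomial has only real roots (or is identically zero). -/
def RealRooted (p : Polynomial ℝ) : Prop :=
  p = 0 ∨ ∀ z : ℂ, Polynomial.aeval z p = 0 → z.im = 0

/-- The list of real roots of `p`, with multiplicity, in decreasing order. -/
def rootsDesc (p : Polynomial ℝ) : List ℝ :=
  (p.roots.sort (· ≤ ·)).reverse

/-- `Interlaces p q` means `p ⪯ q`: both are real-rooted and, listing the roots of `p`
as `α_1 ≥ α_2 ≥ ⋯` and those of `q` as `β_1 ≥ β_2 ≥ ⋯`, one has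
`⋯ ≤ α_2 ≤ β_2 ≤ α_1 ≤ β_1`; by convention the zero polynomial interlaces and is
interlaced by every real-rooted polynomial. -/
def Interlaces (p q : Polynomial ℝ) : Prop :=
  (p = 0 ∧ RealRooted q) ∨ (q = 0 ∧ RealRooted p) ∨
  (RealRooted p ∧ RealRooted q ∧
    Multiset.card q.roots ≤ Multiset.card p.roots + 1 ∧
    Multiset.card p.roots ≤ Multiset.card q.roots ∧
    (∀ (i : ℕ) (hp : i < (rootsDesc p).length) (hq : i < (rootsDesc q).length),
      (rootsDesc p).get ⟨i, hp⟩ ≤ (rootsDesc q).get ⟨i, hq⟩) ∧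
    (∀ (i : ℕ) (hq : i + 1 < (rootsDesc q).length) (hp : i < (rootsDesc p).length),
      (rootsDesc q).get ⟨i + 1, hq⟩ ≤ (rootsDesc p).get ⟨i, hp⟩))



variable {n : ℕ}

def IncOn (b : Fin n → ℕ) (w : Equiv.Perm (Fin n)) : Prop :=
  ∀ p q : Fin n, p < q → b p = b q → w p < w q

lemma fixOn (g : Equiv.Perm (Fin n)) (S : Finset (Fin n))
    (hmap : ∀ p ∈ S, g p ∈ S)
    (hmono : ∀ p ∈ S, ∀ q ∈ S, p < q → g p < g q) :
    ∀ p ∈ S, g p = p := by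
  have h1 : ∀ p ∈ S, ¬ g p < p := by
    by_contra h
    push_neg at h
    obtain ⟨p, hp, hlt⟩ := h
    set S' := S.filter (fun p => g p < p) with hS'
    have hne : S'.Nonempty := ⟨p, Finset.mem_filter.2 ⟨hp, hlt⟩⟩
    set m := S'.min' hne with hm
    obtain ⟨hmS, hmlt⟩ := Finset.mem_filter.1 (S'.min'_mem hne)
    have h2 : g (g m) < g m := hmono _ (hmap _ hmS) _ hmS hmlt
    have : g m ∈ S' := Finset.mem_filter.2 ⟨hmap _ hmS, h2⟩
    exact absurd (S'.min'_le _ this) (not_le.2 hmlt)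
  have h2 : ∀ p ∈ S, ¬ p < g p := by
    by_contra h
    push_neg at h
    obtain ⟨p, hp, hlt⟩ := h
    set S' := S.filter (fun p => p < g p) with hS'
    have hne : S'.Nonempty := ⟨p, Finset.mem_filter.2 ⟨hp, hlt⟩⟩
    set m := S'.max' hne with hm
    obtain ⟨hmS, hmlt⟩ := Finset.mem_filter.1 (S'.max'_mem hne)
    have h2 : g m < g (g m) := hmono _ hmS _ (hmap _ hmS) hmlt
    have : g m ∈ S' := Finset.mem_filter.2 ⟨hmap _ hmS, h2⟩
    exact absurd (S'.le_max' _ this) (not_le.2 hmlt)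
  intro p hp
  rcases lt_trichotomy (g p) p with h | h | h
  · exact absurd h (h1 p hp)
  · exact h
  · exact absurd h (h2 p hp)

lemma key_cancel (b : Fin n → ℕ) (w g : Equiv.Perm (Fin n)) (hw : IncOn b w)
    (hwg : IncOn b (w * g)) (hg : ∀ p, b (g p) = b p) : g = 1 := by
  apply Equiv.ext
  intro p
  have := fixOn g (Finset.univ.filter (fun q => b q = b p))
    (fun q hq => by
      simp only [Finset.mem_filter, Finset.mem_univ, true_and] at hq ⊢
      rw [hg]; exact hq)
    (fun q hq q' hq' hlt => by
      simp only [Finset.mem_filter, Finset.mem_univ, true_and] at hq hq'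
      have hb : b q = b q' := hq.trans hq'.symm
      have hww : w (g q) < w (g q') := hwg q q' hlt hb
      rcases lt_trichotomy (g q) (g q') with h | h | h
      · exact h
      · exact absurd (congrArg w h) (ne_of_lt hww)
      · exact absurd (hw _ _ h (by rw [hg, hg]; exact hb.symm)) (not_lt.2 (le_of_lt hww)))
    p (by simp)
  simpa using this

lemma exists_sort (b : Fin n → ℕ) (u : Equiv.Perm (Fin n)) :
    ∃ g : Equiv.Perm (Fin n), (∀ p, b (g p) = b p) ∧ IncOn b (u * g) := by
  classical
  set F : ℕ → Finset (Fin n) := fun y => Finset.univ.filter (fun p => b p = y) with hF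
  set V : ℕ → Finset (Fin n) := fun y => (F y).image u with hV
  have hcard : ∀ y, (V y).card = (F y).card := fun y =>
    Finset.card_image_of_injective _ u.injective
  set e1 : ∀ y, Fin ((F y).card) ≃o F y := fun y => (F y).orderIsoOfFin rfl with he1
  set e2 : ∀ y, Fin ((F y).card) ≃o V y := fun y => (V y).orderIsoOfFin (hcard y) with he2
  have hmemV : ∀ y (x : Fin n), x ∈ V y ↔ u.symm x ∈ F y := by
    intro y x
    rw [hV]
    simp only [Finset.mem_image]
    constructor
    · rintro ⟨q, hq, rfl⟩; simpa using hq
    · intro h; exact ⟨u.symm x, h, by simp⟩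
  -- fiberwise permutation of {p // b p = y}
  set e3 : ∀ y, {x // x ∈ V y} ≃ {x // x ∈ F y} := fun y =>
    (u.symm.subtypeEquiv (fun x => hmemV y x)) with he3
  set e0 : ∀ y, {p : Fin n // b p = y} ≃ {x // x ∈ F y} := fun y =>
    (Equiv.refl (Fin n)).subtypeEquiv (fun x => by simp [hF]) with he0
  set hperm : ∀ y, Equiv.Perm {p : Fin n // b p = y} := fun y =>
    ((((e0 y).trans (e1 y).symm.toEquiv).trans (e2 y).toEquiv).trans (e3 y)).trans (e0 y).symm
    with hhperm
  set g : Equiv.Perm (Fin n) := DomMulAct.stabilizerEquiv_invFun_aux hperm with hg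
  have hgy : ∀ (p : Fin n) (y : ℕ) (h : b p = y), g p = ((hperm y) ⟨p, h⟩ : Fin n) := by
    intro p y h
    exact DomMulAct.stabilizerEquiv_invFun_eq hperm h
  have hgb : ∀ p, b (g p) = b p := fun p =>
    DomMulAct.comp_stabilizerEquiv_invFun hperm p
  refine ⟨g, hgb, ?_⟩
  intro p q hpq hb
  rw [Equiv.Perm.mul_apply, Equiv.Perm.mul_apply]
  rw [hgy p (b p) rfl, hgy q (b p) hb.symm]
  -- reduce to strict monotonicity of the composite
  have : ∀ (x : {q : Fin n // b q = b p}) , u ((hperm (b p)) x : Fin n)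
      = ((e2 (b p)) ((e1 (b p)).symm ((e0 (b p)) x)) : Fin n) := by
    intro x
    simp only [hhperm, Equiv.trans_apply, he3, he0]
    simp [Equiv.subtypeEquiv]
  rw [this ⟨p, rfl⟩, this ⟨q, hb.symm⟩]
  have h1lt : ((e0 (b p)) ⟨p, rfl⟩ : {x // x ∈ F (b p)}) < (e0 (b p)) ⟨q, hb.symm⟩ := by
    simp only [he0, Equiv.subtypeEquiv, Equiv.coe_fn_mk, Equiv.refl_apply]
    exact hpq
  have h2lt := (e1 (b p)).symm.strictMono h1lt
  have h3lt := (e2 (b p)).strictMono h2lt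
  exact h3lt

lemma card_mul (b : Fin n → ℕ) :
    (Finset.univ.filter (fun w : Equiv.Perm (Fin n) => IncOn b w)).card *
      Fintype.card {g : Equiv.Perm (Fin n) // b ∘ g = b} = n ! := by
  classical
  have hinj : Function.Injective (fun x : {w : Equiv.Perm (Fin n) // IncOn b w} ×
      {g : Equiv.Perm (Fin n) // b ∘ g = b} => (x.1.1 * x.2.1 : Equiv.Perm (Fin n))) := by
    rintro ⟨⟨w1, hw1⟩, ⟨g1, hg1⟩⟩ ⟨⟨w2, hw2⟩, ⟨g2, hg2⟩⟩ h
    simp only at h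
    have hgmem : ∀ p, b ((g2 * g1⁻¹) p) = b p := by
      intro p
      have h2 : b (g1⁻¹ p) = b p := by
        conv_rhs => rw [← Equiv.apply_symm_apply g1 p]
        exact (congrFun hg1 (g1⁻¹ p)).symm
      simpa [Equiv.Perm.mul_apply] using (congrFun hg2 (g1⁻¹ p)).trans h2
    have hkey : (g2 * g1⁻¹ : Equiv.Perm (Fin n)) = 1 := by
      apply key_cancel b w2 _ hw2 _ hgmem
      have heq : w2 * (g2 * g1⁻¹) = w1 := by
        rw [← mul_assoc, ← h, mul_assoc, mul_inv_cancel, mul_one]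
      rw [heq]; exact hw1
    have hgg : g2 = g1 := by
      have := congrArg (· * g1) hkey
      simpa [mul_assoc] using this
    have hww : w1 = w2 := by
      rw [hgg] at h
      exact mul_right_cancel h
    simp [hww, hgg]
  have hsurj : Function.Surjective (fun x : {w : Equiv.Perm (Fin n) // IncOn b w} ×
      {g : Equiv.Perm (Fin n) // b ∘ g = b} => (x.1.1 * x.2.1 : Equiv.Perm (Fin n))) := by
    intro u
    obtain ⟨g, hg1, hg2⟩ := exists_sort b u
    refine ⟨⟨⟨u * g, hg2⟩, ⟨g⁻¹, ?_⟩⟩, ?_⟩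
    · funext p
      have : b (g (g⁻¹ p)) = b (g⁻¹ p) := hg1 _
      simpa [Equiv.apply_symm_apply] using this.symm
    · simp [mul_assoc]
  have := Fintype.card_congr (Equiv.ofBijective _ ⟨hinj, hsurj⟩)
  rw [Fintype.card_prod, Fintype.card_perm, Fintype.card_fin] at this
  rw [← this]
  simp [Fintype.card_subtype]



lemma mem_descSet_bounds (w : Equiv.Perm (Fin n)) (k : ℕ) (hk : k ∈ descSet w) :
    1 ≤ k ∧ k < n := by
  simp only [descSet, Finset.mem_image, Finset.mem_filter] at hk
  obtain ⟨i, _, hik⟩ := hk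
  have := i.isLt
  omega

lemma mem_descSet_iff (w : Equiv.Perm (Fin n)) (k : ℕ) (h1 : 1 ≤ k) (h2 : k < n) :
    k ∈ descSet w ↔ w ⟨k, h2⟩ < w ⟨k - 1, by omega⟩ := by
  simp only [descSet, Finset.mem_image, Finset.mem_filter, Finset.mem_univ, true_and]
  constructor
  · rintro ⟨i, hcond, hik⟩
    subst hik
    have e2 : (⟨i.val + 1 - 1, by omega⟩ : Fin n) = ⟨i.val, by have := i.isLt; omega⟩ := by
      apply Fin.ext; simp
    rw [e2]
    exact hcond
  · intro h
    refine ⟨⟨k - 1, by omega⟩, ?_, by simp; omega⟩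
    have e1 : (⟨k - 1 + 1, by omega⟩ : Fin n) = ⟨k, h2⟩ := by
      apply Fin.ext; simp only [Fin.val_mk]; omega
    rw [e1]
    exact h

lemma lt_of_adjacent (w : Equiv.Perm (Fin n)) : ∀ (d : ℕ) (p q : Fin n),
    q.val = p.val + d + 1 →
    (∀ (k : ℕ) (hk1 : p.val < k) (hk2 : k ≤ q.val), w ⟨k - 1, by have := q.isLt; omega⟩
      < w ⟨k, by have := q.isLt; omega⟩) →
    w p < w q := by
  intro d
  induction d with
  | zero =>
    intro p q hq h
    have := h q.val (by omega) le_rfl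
    have e1 : (⟨q.val - 1, by have := q.isLt; omega⟩ : Fin n) = p := Fin.ext (by simp; omega)
    have e2 : (⟨q.val, by have := q.isLt; omega⟩ : Fin n) = q := Fin.ext rfl
    rwa [e1, e2] at this
  | succ d ih =>
    intro p q hq h
    set m : Fin n := ⟨p.val + d + 1, by have := q.isLt; omega⟩ with hm
    have h1 : w p < w m := ih p m rfl (fun k hk1 hk2 => h k hk1 (by simp [hm] at hk2 ⊢; omega))
    have h2 := h q.val (by omega) le_rfl
    have e1 : (⟨q.val - 1, by have := q.isLt; omega⟩ : Fin n) = m := Fin.ext (by simp [hm]; omega)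
    have e2 : (⟨q.val, by have := q.isLt; omega⟩ : Fin n) = q := Fin.ext rfl
    rw [e1, e2] at h2
    exact h1.trans h2

lemma descSet_subset_iff (b : Fin n → ℕ) (hmono : ∀ p q : Fin n, p ≤ q → b p ≤ b q)
    (S : Finset ℕ)
    (hjump : ∀ (k : ℕ) (h1 : 1 ≤ k) (h2 : k < n),
      (k ∈ S ↔ b ⟨k, h2⟩ ≠ b ⟨k - 1, by omega⟩))
    (w : Equiv.Perm (Fin n)) : descSet w ⊆ S ↔ IncOn b w := by
  constructor
  · intro hsub p q hpq hb
    have hd : q.val = p.val + (q.val - p.val - 1) + 1 := by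
      have : p.val < q.val := hpq
      omega
    apply lt_of_adjacent w _ p q hd
    intro k hk1 hk2
    have hkn : k < n := lt_of_le_of_lt hk2 q.isLt
    have hk0 : 1 ≤ k := by omega
    have hbeq : b ⟨k, hkn⟩ = b ⟨k - 1, by omega⟩ := by
      have l1 : b p ≤ b ⟨k - 1, by omega⟩ := hmono _ _ (by simp only [Fin.le_def, Fin.val_mk]; omega)
      have l2 : b ⟨k - 1, by omega⟩ ≤ b ⟨k, hkn⟩ := hmono _ _ (by simp only [Fin.le_def, Fin.val_mk]; omega)
      have l3 : b ⟨k, hkn⟩ ≤ b q := hmono _ _ (by simp only [Fin.le_def, Fin.val_mk]; omega)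
      omega
    have hknotS : k ∉ S := fun hkS => ((hjump k hk0 hkn).1 hkS) hbeq
    have hknotD : k ∉ descSet w := fun hkD => hknotS (hsub hkD)
    rw [mem_descSet_iff w k hk0 hkn] at hknotD
    have hne : w ⟨k - 1, by omega⟩ ≠ w ⟨k, hkn⟩ := by
      intro h
      have := w.injective h
      simp only [Fin.mk.injEq] at this
      omega
    rcases lt_or_ge (w ⟨k - 1, by omega⟩) (w ⟨k, hkn⟩) with h | h
    · exact h
    · exact absurd (lt_of_le_of_ne h (Ne.symm hne)) hknotD
  · intro hinc k hk
    obtain ⟨hk1, hk2⟩ := mem_descSet_bounds w k hk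
    by_contra hkS
    have hbeq : b ⟨k, hk2⟩ = b ⟨k - 1, by omega⟩ := by
      by_contra hne
      exact hkS ((hjump k hk1 hk2).2 hne)
    rw [mem_descSet_iff w k hk1 hk2] at hk
    have := hinc ⟨k - 1, by omega⟩ ⟨k, hk2⟩ (by simp only [Fin.lt_def, Fin.val_mk]; omega) hbeq.symm
    exact absurd hk (not_lt.2 (le_of_lt this))



def bfun (n r : ℕ) (a : ℕ → ℕ) : Fin n → ℕ := fun p =>
  ((Finset.Icc 1 r).filter (fun t => a t ≤ p.val)).card

variable {r : ℕ} {a : ℕ → ℕ}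

lemma a_mono (hinc : ∀ i ≤ r, a i < a (i + 1)) :
    ∀ t, t ≤ r + 1 → ∀ s, s < t → a s < a t := by
  intro t
  induction t with
  | zero => omega
  | succ t ih =>
    intro ht s hs
    rcases Nat.lt_or_ge s t with h | h
    · exact (ih (by omega) s h).trans (hinc t (by omega))
    · have : s = t := by omega
      subst this
      exact hinc s (by omega)

lemma a_mono_le (hinc : ∀ i ≤ r, a i < a (i + 1)) :
    ∀ s t, s ≤ t → t ≤ r + 1 → a s ≤ a t := by
  intro s t hst htr
  rcases Nat.eq_or_lt_of_le hst with h | h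
  · exact le_of_eq (congrArg a h)
  · exact le_of_lt (a_mono hinc t htr s h)

lemma bfun_mono : ∀ p q : Fin n, p ≤ q → bfun n r a p ≤ bfun n r a q := by
  intro p q hpq
  apply Finset.card_le_card
  intro t ht
  rw [Finset.mem_filter] at ht ⊢
  exact ⟨ht.1, le_trans ht.2 hpq⟩

lemma bfun_interval (hinc : ∀ i ≤ r, a i < a (i + 1)) (j : ℕ) (hj : j ≤ r) (p : Fin n)
    (h1 : a j ≤ p.val) (h2 : p.val < a (j + 1)) : bfun n r a p = j := by
  have key : (Finset.Icc 1 r).filter (fun t => a t ≤ p.val) = Finset.Icc 1 j := by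
    ext t
    simp only [Finset.mem_filter, Finset.mem_Icc]
    constructor
    · rintro ⟨⟨ht1, ht2⟩, hat⟩
      refine ⟨ht1, ?_⟩
      by_contra h
      push_neg at h
      have : a (j + 1) ≤ a t := a_mono_le hinc _ _ (by omega) (by omega)
      omega
    · rintro ⟨ht1, ht2⟩
      have : a t ≤ a j := a_mono_le hinc _ _ ht2 (by omega)
      exact ⟨⟨ht1, by omega⟩, by omega⟩
  rw [bfun, key, Nat.card_Icc]
  omega

lemma bfun_cover (ha0 : a 0 = 0) (han : a (r + 1) = n) (hinc : ∀ i ≤ r, a i < a (i + 1))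
    (p : Fin n) : ∃ j, j ≤ r ∧ a j ≤ p.val ∧ p.val < a (j + 1) := by
  set M := (Finset.range (r + 2)).filter (fun j => a j ≤ p.val) with hM
  have hne : M.Nonempty := ⟨0, Finset.mem_filter.2 ⟨Finset.mem_range.2 (by omega), by omega⟩⟩
  obtain ⟨hjr, hja⟩ := Finset.mem_filter.1 (M.max'_mem hne)
  rw [Finset.mem_range] at hjr
  have hjn : M.max' hne ≠ r + 1 := by
    intro h
    rw [h, han] at hja
    exact absurd hja (not_le.2 p.isLt)
  refine ⟨M.max' hne, by omega, hja, ?_⟩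
  by_contra h
  push_neg at h
  have hmem : M.max' hne + 1 ∈ M := Finset.mem_filter.2 ⟨Finset.mem_range.2 (by omega), h⟩
  have := M.le_max' _ hmem
  omega

lemma bfun_jump (ha0 : a 0 = 0) (han : a (r + 1) = n) (hinc : ∀ i ≤ r, a i < a (i + 1))
    (k : ℕ) (h1 : 1 ≤ k) (h2 : k < n) :
    (k ∈ (Finset.Icc 1 r).image a ↔ bfun n r a ⟨k, h2⟩ ≠ bfun n r a ⟨k - 1, by omega⟩) := by
  constructor
  · rintro hk
    obtain ⟨t, ht, hat⟩ := Finset.mem_image.1 hk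
    rw [Finset.mem_Icc] at ht
    have hsub : (Finset.Icc 1 r).filter (fun s => a s ≤ k - 1) ⊂
        (Finset.Icc 1 r).filter (fun s => a s ≤ k) := by
      constructor
      · intro s hs
        rw [Finset.mem_filter] at hs ⊢
        exact ⟨hs.1, by omega⟩
      · intro hcon
        have : t ∈ (Finset.Icc 1 r).filter (fun s => a s ≤ k) :=
          Finset.mem_filter.2 ⟨Finset.mem_Icc.2 ht, by omega⟩
        have := hcon this
        rw [Finset.mem_filter] at this
        omega
    have := Finset.card_lt_card hsub
    simp only [bfun, Fin.val_mk]
    omega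
  · intro hne
    by_contra hk
    apply hne
    have key : (Finset.Icc 1 r).filter (fun s => a s ≤ k) =
        (Finset.Icc 1 r).filter (fun s => a s ≤ k - 1) := by
      ext t
      simp only [Finset.mem_filter, Finset.mem_Icc]
      constructor
      · rintro ⟨ht, hat⟩
        refine ⟨ht, ?_⟩
        have : a t ≠ k := by
          intro h
          exact hk (Finset.mem_image.2 ⟨t, Finset.mem_Icc.2 ht, h⟩)
        omega
      · rintro ⟨ht, hat⟩
        exact ⟨ht, by omega⟩
    simp only [bfun, Fin.val_mk, key]

lemma card_val_interval (lo hi : ℕ) (hhi : hi ≤ n) :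
    (Finset.univ.filter (fun p : Fin n => lo ≤ p.val ∧ p.val < hi)).card = hi - lo := by
  have himg : (Finset.univ.filter (fun p : Fin n => lo ≤ p.val ∧ p.val < hi)).image Fin.val
      = Finset.Ico lo hi := by
    ext x
    simp only [Finset.mem_image, Finset.mem_filter, Finset.mem_univ, true_and, Finset.mem_Ico]
    constructor
    · rintro ⟨p, hp, rfl⟩
      exact hp
    · intro hx
      exact ⟨⟨x, by omega⟩, hx, rfl⟩
  rw [← Nat.card_Ico lo hi, ← himg]
  exact (Finset.card_image_of_injective _ Fin.val_injective).symm

lemma bfun_fiber (ha0 : a 0 = 0) (han : a (r + 1) = n) (hinc : ∀ i ≤ r, a i < a (i + 1))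
    (j : ℕ) (hj : j ≤ r) :
    (Finset.univ.filter (fun p : Fin n => bfun n r a p = j)).card = a (j + 1) - a j := by
  have key : (Finset.univ.filter (fun p : Fin n => bfun n r a p = j)) =
      (Finset.univ.filter (fun p : Fin n => a j ≤ p.val ∧ p.val < a (j + 1))) := by
    ext p
    simp only [Finset.mem_filter, Finset.mem_univ, true_and]
    constructor
    · intro hb
      obtain ⟨j', hj', hj'1, hj'2⟩ := bfun_cover ha0 han hinc p
      have := bfun_interval hinc j' hj' p hj'1 hj'2
      rw [hb] at this
      subst this
      exact ⟨hj'1, hj'2⟩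
    · intro ⟨hp1, hp2⟩
      exact bfun_interval hinc j hj p hp1 hp2
  rw [key]
  have hbound : a (j + 1) ≤ n := by
    rw [← han]
    exact a_mono_le hinc _ _ (by omega) le_rfl
  exact card_val_interval _ _ hbound

theorem cardG (n r : ℕ) (a : ℕ → ℕ) (ha0 : a 0 = 0) (han : a (r + 1) = n)
    (hinc : ∀ i ≤ r, a i < a (i + 1)) :
    (Finset.univ.filter
        (fun w : Equiv.Perm (Fin n) => descSet w ⊆ (Finset.Icc 1 r).image a)).card *
      ∏ j ∈ Finset.range (r + 1), (a (j + 1) - a j)! = n ! := by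
  have hfilter : (Finset.univ.filter
      (fun w : Equiv.Perm (Fin n) => descSet w ⊆ (Finset.Icc 1 r).image a)) =
      Finset.univ.filter (fun w => IncOn (bfun n r a) w) := by
    apply Finset.filter_congr
    intro w _
    exact descSet_subset_iff (bfun n r a) bfun_mono _
      (fun k h1 h2 => bfun_jump ha0 han hinc k h1 h2) w
  have hstab : Fintype.card {g : Equiv.Perm (Fin n) // bfun n r a ∘ g = bfun n r a} =
      ∏ j ∈ Finset.range (r + 1), (a (j + 1) - a j)! := by
    rw [DomMulAct.stabilizer_card']
    have himage : Finset.univ.image (bfun n r a) ⊆ Finset.range (r + 1) := by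
      intro y hy
      obtain ⟨p, _, rfl⟩ := Finset.mem_image.1 hy
      rw [Finset.mem_range]
      have : bfun n r a p ≤ r := by
        have := Finset.card_le_card (Finset.filter_subset (fun t => a t ≤ p.val)
          (Finset.Icc 1 r))
        rw [Nat.card_Icc] at this
        simpa [bfun] using this
      omega
    rw [Finset.prod_subset himage]
    · apply Finset.prod_congr rfl
      intro j hj
      rw [Finset.mem_range] at hj
      rw [Fintype.card_subtype, bfun_fiber ha0 han hinc j (by omega)]
    · intro x _ hx
      have : IsEmpty {p : Fin n // bfun n r a p = x} := by
        constructor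
        rintro ⟨p, hp⟩
        exact hx (Finset.mem_image.2 ⟨p, Finset.mem_univ p, hp⟩)
      rw [Fintype.card_eq_zero]
      exact Nat.factorial_zero
  rw [hfilter, ← hstab]
  exact card_mul (bfun n r a)

theorem stmt6 (n r : ℕ) (hn : 0 < n) (a : ℕ → ℕ) (ha0 : a 0 = 0) (han : a (r + 1) = n)
    (hinc : ∀ i ≤ r, a i < a (i + 1)) (T : Finset ℕ) (hT : T = (Finset.Icc 1 r).image a) :
    (∑ w ∈ Finset.univ.filter (fun w : Equiv.Perm (Fin n) => descSet w ⊆ T),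
        ((descSet w).card : ℝ)) =
      ((Finset.univ.filter (fun w : Equiv.Perm (Fin n) => descSet w ⊆ T)).card : ℝ) *
        ((r : ℝ) - ∑ i ∈ Finset.Icc 1 r,
          ((((a i - a (i - 1)) + (a (i + 1) - a i)).choose (a i - a (i - 1)) : ℝ))⁻¹) ∧
    ∀ i ∈ Finset.Icc 1 r,
      ((Finset.univ.filter (fun w : Equiv.Perm (Fin n) =>
          descSet w ⊆ T ∧ a i ∈ descSet w)).card : ℝ) =
        ((Finset.univ.filter (fun w : Equiv.Perm (Fin n) => descSet w ⊆ T)).card : ℝ) *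
          (1 - ((((a i - a (i - 1)) + (a (i + 1) - a i)).choose (a i - a (i - 1)) : ℝ))⁻¹) := by
  subst hT
  set T := (Finset.Icc 1 r).image a with hT
  set N := (Finset.univ.filter (fun w : Equiv.Perm (Fin n) => descSet w ⊆ T)).card with hNdef
  have hG := cardG n r a ha0 han hinc
  -- The key cardinality identity, for each i ∈ [1, r]
  have key2 : ∀ i ∈ Finset.Icc 1 r,
      ((Finset.univ.filter (fun w : Equiv.Perm (Fin n) =>
          descSet w ⊆ T ∧ a i ∈ descSet w)).card : ℝ) =
        (N : ℝ) * (1 - ((((a i - a (i - 1)) + (a (i + 1) - a i)).choose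
          (a i - a (i - 1)) : ℝ))⁻¹) := by
    intro i hi
    obtain ⟨hi1, hi2⟩ := Finset.mem_Icc.1 hi
    set c1 := a i - a (i - 1) with hc1
    set c2 := a (i + 1) - a i with hc2
    set B := (c1 + c2).choose c1 with hB
    set a' : ℕ → ℕ := fun j => if j < i then a j else a (j + 1) with ha'
    have ha0' : a' 0 = 0 := by
      simp only [ha']
      rw [if_pos (by omega)]
      exact ha0
    have han' : a' (r - 1 + 1) = n := by
      simp only [ha']
      rw [show r - 1 + 1 = r from by omega, if_neg (by omega)]
      exact han
    have hinc' : ∀ j ≤ r - 1, a' j < a' (j + 1) := by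
      intro j hj
      by_cases h1 : j + 1 < i
      · simp only [ha']
        rw [if_pos (by omega), if_pos h1]
        exact hinc j (by omega)
      · by_cases h2 : j < i
        · simp only [ha']
          rw [if_pos h2, if_neg h1]
          exact lt_of_lt_of_le (hinc j (by omega))
            (a_mono_le hinc (j + 1) (j + 2) (by omega) (by omega))
        · simp only [ha']
          rw [if_neg h2, if_neg (by omega)]
          exact hinc (j + 1) (by omega)
    have hG' := cardG n (r - 1) a' ha0' han' hinc'
    have herase : (Finset.Icc 1 (r - 1)).image a' = T.erase (a i) := by
      ext x
      simp only [hT, Finset.mem_image, Finset.mem_erase, Finset.mem_Icc]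
      constructor
      · rintro ⟨s, ⟨hs1, hs2⟩, rfl⟩
        by_cases hsi : s < i
        · have hx : a' s = a s := by simp only [ha']; rw [if_pos hsi]
          refine ⟨?_, s, ⟨hs1, by omega⟩, hx.symm⟩
          rw [hx]
          exact Nat.ne_of_lt (a_mono hinc i (by omega) s hsi)
        · have hx : a' s = a (s + 1) := by simp only [ha']; rw [if_neg hsi]
          refine ⟨?_, s + 1, ⟨by omega, by omega⟩, hx.symm⟩
          rw [hx]
          exact (Nat.ne_of_lt (a_mono hinc (s + 1) (by omega) i (by omega))).symm
      · rintro ⟨hne, t, ⟨ht1, ht2⟩, rfl⟩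
        have hti : t ≠ i := fun h => hne (congrArg a h)
        by_cases htlt : t < i
        · refine ⟨t, ⟨ht1, by omega⟩, by simp only [ha']; rw [if_pos htlt]⟩
        · refine ⟨t - 1, ⟨by omega, by omega⟩, ?_⟩
          simp only [ha']
          rw [if_neg (by omega)]
          exact congrArg a (by omega)
    rw [herase] at hG'
    set N' := (Finset.univ.filter
      (fun w : Equiv.Perm (Fin n) => descSet w ⊆ T.erase (a i))).card with hN'def
    -- product bookkeeping
    set f : ℕ → ℕ := fun j => (a (j + 1) - a j)! with hf
    set g : ℕ → ℕ := fun j => (a' (j + 1) - a' j)! with hg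
    have hsum : a (i + 1) - a (i - 1) = c1 + c2 := by
      have h1 : a (i - 1) ≤ a i := a_mono_le hinc (i - 1) i (by omega) (by omega)
      have h2 : a i ≤ a (i + 1) := a_mono_le hinc i (i + 1) (by omega) (by omega)
      omega
    have e1 : ∏ j ∈ Finset.range (r + 1), f j =
        (∏ j ∈ Finset.Ico 0 (i - 1), f j) * ∏ j ∈ Finset.Ico (i - 1) (r + 1), f j := by
      rw [Finset.range_eq_Ico, ← Finset.prod_Ico_consecutive f (Nat.zero_le (i - 1)) (by omega)]
    have e2 : ∏ j ∈ Finset.Ico (i - 1) (r + 1), f j =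
        f (i - 1) * ∏ j ∈ Finset.Ico i (r + 1), f j := by
      rw [Finset.prod_eq_prod_Ico_succ_bot (by omega) f, show i - 1 + 1 = i from by omega]
    have e3 : ∏ j ∈ Finset.Ico i (r + 1), f j =
        f i * ∏ j ∈ Finset.Ico (i + 1) (r + 1), f j :=
      Finset.prod_eq_prod_Ico_succ_bot (by omega) f
    have e1' : ∏ j ∈ Finset.range (r - 1 + 1), g j =
        (∏ j ∈ Finset.Ico 0 (i - 1), g j) * ∏ j ∈ Finset.Ico (i - 1) r, g j := by
      rw [show r - 1 + 1 = r from by omega, Finset.range_eq_Ico,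
        ← Finset.prod_Ico_consecutive g (Nat.zero_le (i - 1)) (by omega)]
    have e2' : ∏ j ∈ Finset.Ico (i - 1) r, g j = g (i - 1) * ∏ j ∈ Finset.Ico i r, g j := by
      rw [Finset.prod_eq_prod_Ico_succ_bot (by omega) g, show i - 1 + 1 = i from by omega]
    have hg1 : ∏ j ∈ Finset.Ico 0 (i - 1), g j = ∏ j ∈ Finset.Ico 0 (i - 1), f j := by
      apply Finset.prod_congr rfl
      intro j hj
      rw [Finset.mem_Ico] at hj
      simp only [hg, hf, ha']
      rw [if_pos (by omega), if_pos (by omega)]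
    have hg2 : g (i - 1) = (c1 + c2)! := by
      simp only [hg, ha']
      rw [show i - 1 + 1 = i from by omega, if_neg (by omega), if_pos (by omega), hsum]
    have hg3 : ∏ j ∈ Finset.Ico i r, g j = ∏ j ∈ Finset.Ico (i + 1) (r + 1), f j := by
      have hcong : ∀ j ∈ Finset.Ico i r, g j = f (j + 1) := by
        intro j hj
        rw [Finset.mem_Ico] at hj
        simp only [hg, hf, ha']
        rw [if_neg (by omega), if_neg (by omega)]
      rw [Finset.prod_congr rfl hcong, Finset.prod_Ico_eq_prod_range,
        Finset.prod_Ico_eq_prod_range, show r + 1 - (i + 1) = r - i from by omega]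
      apply Finset.prod_congr rfl
      intro x _
      exact congrArg f (by omega)
    have hf1 : f (i - 1) = c1 ! := by
      simp only [hf]
      rw [show i - 1 + 1 = i from by omega]
    have hf2 : f i = c2 ! := rfl
    have hcf : (c1 + c2)! = B * c1 ! * c2 ! := by
      rw [hB, ← Nat.choose_mul_factorial_mul_factorial (Nat.le_add_right c1 c2),
        Nat.add_sub_cancel_left]
    -- combine the two count identities
    have hkey : N * ((∏ j ∈ Finset.Ico 0 (i - 1), f j) *
        (c1 ! * (c2 ! * ∏ j ∈ Finset.Ico (i + 1) (r + 1), f j))) =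
        N' * ((∏ j ∈ Finset.Ico 0 (i - 1), f j) *
        ((B * c1 ! * c2 !) * ∏ j ∈ Finset.Ico (i + 1) (r + 1), f j)) := by
      have hL : N * ∏ j ∈ Finset.range (r + 1), f j =
          N' * ∏ j ∈ Finset.range (r - 1 + 1), g j := by
        rw [hG, hG']
      rw [e1, e2, e3, e1', e2', hg1, hg2, hg3, hf1, hf2, hcf] at hL
      exact hL
    have hNN : N = N' * B := by
      have hpos : 0 < (∏ j ∈ Finset.Ico 0 (i - 1), f j) *
          (c1 ! * (c2 ! * ∏ j ∈ Finset.Ico (i + 1) (r + 1), f j)) := by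
        apply Nat.mul_pos
        · exact Finset.prod_pos (fun _ _ => Nat.factorial_pos _)
        · exact Nat.mul_pos (Nat.factorial_pos _) (Nat.mul_pos (Nat.factorial_pos _)
            (Finset.prod_pos (fun _ _ => Nat.factorial_pos _)))
      apply Nat.eq_of_mul_eq_mul_right hpos
      rw [hkey]
      ring
    -- the split of N
    have hsplit : (Finset.univ.filter (fun w : Equiv.Perm (Fin n) =>
        descSet w ⊆ T ∧ a i ∈ descSet w)).card + N' = N := by
      have h1 := Finset.card_filter_add_card_filter_not
        (s := Finset.univ.filter (fun w : Equiv.Perm (Fin n) => descSet w ⊆ T))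
        (p := fun w => a i ∈ descSet w)
      rw [Finset.filter_filter, Finset.filter_filter] at h1
      have h2 : Finset.univ.filter (fun w : Equiv.Perm (Fin n) =>
          descSet w ⊆ T ∧ ¬ a i ∈ descSet w) =
          Finset.univ.filter (fun w : Equiv.Perm (Fin n) => descSet w ⊆ T.erase (a i)) := by
        apply Finset.filter_congr
        intro w _
        exact (Finset.subset_erase).symm
      rw [h2] at h1
      exact h1
    -- real arithmetic
    have hBpos : 0 < B := Nat.choose_pos (Nat.le_add_right c1 c2)
    have hBne : (B : ℝ) ≠ 0 := ne_of_gt (by exact_mod_cast hBpos)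
    have hA : ((Finset.univ.filter (fun w : Equiv.Perm (Fin n) =>
        descSet w ⊆ T ∧ a i ∈ descSet w)).card : ℝ) = (N : ℝ) - (N' : ℝ) := by
      have := congrArg (fun x : ℕ => (x : ℝ)) hsplit
      push_cast at this
      linarith
    have hNr : (N : ℝ) = (N' : ℝ) * (B : ℝ) := by exact_mod_cast hNN
    rw [hA, hNr]
    field_simp
  refine ⟨?_, key2⟩
  -- first bullet from the second
  have hstep : ∀ w ∈ Finset.univ.filter (fun w : Equiv.Perm (Fin n) => descSet w ⊆ T),
      ((descSet w).card : ℝ) =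
      ∑ i ∈ Finset.Icc 1 r, (if a i ∈ descSet w then (1 : ℝ) else 0) := by
    intro w hw
    rw [Finset.mem_filter] at hw
    have hsub := hw.2
    have h1 : descSet w = T.filter (fun x => x ∈ descSet w) := by
      ext x
      simp only [Finset.mem_filter]
      exact ⟨fun hx => ⟨hsub hx, hx⟩, fun hx => hx.2⟩
    have hinj : Set.InjOn a (Finset.Icc 1 r) := by
      intro s hs t ht hst
      simp only [Finset.coe_Icc, Set.mem_Icc] at hs ht
      by_contra hne
      rcases Nat.lt_or_ge s t with h | h
      · exact absurd hst (Nat.ne_of_lt (a_mono hinc t (by omega) s h))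
      · exact absurd hst (Nat.ne_of_gt (a_mono hinc s (by omega) t (by omega)))
    calc ((descSet w).card : ℝ)
        = ((T.filter (fun x => x ∈ descSet w)).card : ℝ) := by rw [← h1]
      _ = ∑ x ∈ T, (if x ∈ descSet w then (1 : ℝ) else 0) := by
          rw [Finset.card_filter]
          push_cast
          rfl
      _ = ∑ i ∈ Finset.Icc 1 r, (if a i ∈ descSet w then (1 : ℝ) else 0) := by
          rw [hT]
          exact Finset.sum_image (fun s hs t ht h => hinj hs ht h)
  rw [Finset.sum_congr rfl hstep, Finset.sum_comm]
  have hinner : ∀ i ∈ Finset.Icc 1 r,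
      (∑ w ∈ Finset.univ.filter (fun w : Equiv.Perm (Fin n) => descSet w ⊆ T),
        (if a i ∈ descSet w then (1 : ℝ) else 0)) =
      (N : ℝ) * (1 - ((((a i - a (i - 1)) + (a (i + 1) - a i)).choose
          (a i - a (i - 1)) : ℝ))⁻¹) := by
    intro i hi
    rw [Finset.sum_boole, Finset.filter_filter]
    exact key2 i hi
  rw [Finset.sum_congr rfl hinner, ← Finset.mul_sum, Finset.sum_sub_distrib]
  simp only [Finset.sum_const, Nat.card_Icc, smul_eq_mul, mul_one]
  rw [show r + 1 - 1 = r from by omega]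
  simp [nsmul_eq_mul]
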